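/- Let C be a local identifying code in the square grid and let c ∈ C be a codeword with I(c) = {c}. Then every neighbor of c is covered by at least two codewords, and hence s(c) ≤ 3. -/

import Mathlib

open SimpleGraph

/-- The closed neighbourhood of a vertex. -/
def cnbr {V : Type*} (G : SimpleGraph V) (u : V) : Set V := insert u (G.neighborSet u)

/-- The `I`-set of a vertex with respect to a code `C`. -/
def iset {V : Type*} (G : SimpleGraph V) (C : Set V) (u : V) : Set V := cnbr G u ∩ C

/-- `C` is a dominating set (covering code). -/
def IsDominating {V : Type*} (G : SimpleGraph V) (C : Set V) : Prop :=
  ∀ u, (iset G C u).Nonempty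

/-- `C` is a local identifying code. -/
def IsLocalID {V : Type*} (G : SimpleGraph V) (C : Set V) : Prop :=
  IsDominating G C ∧ ∀ u v, G.Adj u v → iset G C u ≠ iset G C v

/-- `C` is a local locating-dominating code. -/
def IsLocalLD {V : Type*} (G : SimpleGraph V) (C : Set V) : Prop :=
  IsDominating G C ∧ ∀ u v, G.Adj u v → u ∉ C → v ∉ C → iset G C u ≠ iset G C v

/-- `C` is an identifying code. -/
def IsID {V : Type*} (G : SimpleGraph V) (C : Set V) : Prop :=
  IsDominating G C ∧ ∀ u v : V, u ≠ v → iset G C u ≠ iset G C v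

/-- `C` is a locating-dominating code. -/
def IsLD {V : Type*} (G : SimpleGraph V) (C : Set V) : Prop :=
  IsDominating G C ∧ ∀ u v : V, u ≠ v → u ∉ C → v ∉ C → iset G C u ≠ iset G C v

/-- The share of a codeword `c`. -/
noncomputable def share {V : Type*} (G : SimpleGraph V) (C : Set V) (c : V) : ℝ :=
  ∑ᶠ u ∈ cnbr G c, (1 : ℝ) / (iset G C u).ncard

/-- The square grid. -/
def squareGrid : SimpleGraph (ℤ × ℤ) where
  Adj u v := u - v = (1, 0) ∨ u - v = (-1, 0) ∨ u - v = (0, 1) ∨ u - v = (0, -1)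
  symm := by
    constructor
    intro u v h
    have hvu : v - u = -(u - v) := by ring
    rcases h with h | h | h | h <;> rw [hvu, h] <;> simp [Prod.ext_iff]
  loopless := by
    constructor
    intro u h
    simp [Prod.ext_iff, sub_self] at h

lemma cnbr_eq (c : ℤ × ℤ) :
    cnbr squareGrid c =
      ↑({c, c + (1,0), c - (1,0), c + (0,1), c - (0,1)} : Finset (ℤ × ℤ)) := by
  ext u
  simp only [cnbr, squareGrid, Set.mem_insert_iff, SimpleGraph.mem_neighborSet,
    SimpleGraph.Adj, Finset.coe_insert, Finset.coe_singleton, Set.mem_insert_iff,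
    Set.mem_singleton_iff, Prod.ext_iff, Prod.fst_sub, Prod.snd_sub, Prod.fst_add,
    Prod.snd_add]
  constructor <;> intro h <;> rcases u with ⟨a,b⟩ <;> rcases c with ⟨x,y⟩ <;>
    simp_all [Prod.ext_iff] <;> omega

lemma cnbr_fin (c : ℤ × ℤ) : (cnbr squareGrid c).Finite := by
  rw [cnbr_eq]; exact Finset.finite_toSet _

lemma iset_fin (C : Set (ℤ × ℤ)) (u : ℤ × ℤ) : (iset squareGrid C u).Finite :=
  (cnbr_fin u).subset (Set.inter_subset_left)

lemma grid_adj (c d : ℤ × ℤ) (h : c - d = (1,0) ∨ c - d = (-1,0) ∨ c - d = (0,1) ∨ c - d = (0,-1)) :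
    squareGrid.Adj c d := h

/-- In the square grid, if `c` is a codeword of a local identifying code with
`I(c) = {c}`, then each neighbour of `c` is covered by at least two codewords and
`s(c) ≤ 3`. -/
theorem stmt18 (C : Set (ℤ × ℤ)) (hC : IsLocalID squareGrid C) (c : ℤ × ℤ) (hc : c ∈ C)
    (hI : iset squareGrid C c = {c}) :
    (∀ u, squareGrid.Adj c u → 2 ≤ (iset squareGrid C u).ncard) ∧
      share squareGrid C c ≤ 3 := by
  obtain ⟨hdom, hloc⟩ := hC
  have key : ∀ u, squareGrid.Adj c u → 2 ≤ (iset squareGrid C u).ncard := by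
    intro u hadj
    have hcmem : c ∈ iset squareGrid C u :=
      ⟨Set.mem_insert_of_mem _ hadj.symm, hc⟩
    have hne : iset squareGrid C u ≠ {c} := by
      intro h
      exact hloc c u hadj (by rw [hI, h])
    obtain ⟨x, hx, hxc⟩ : ∃ x ∈ iset squareGrid C u, x ≠ c := by
      by_contra hcon
      push_neg at hcon
      exact hne (Set.eq_singleton_iff_unique_mem.mpr ⟨hcmem, hcon⟩)
    rw [show (2 : ℕ) = 1 + 1 from rfl, Nat.add_one_le_iff]
    exact (Set.one_lt_ncard_iff (iset_fin C u)).mpr ⟨x, c, hx, hcmem, hxc⟩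
  refine ⟨key, ?_⟩
  have hsum : share squareGrid C c =
      ∑ u ∈ ({c, c + (1,0), c - (1,0), c + (0,1), c - (0,1)} : Finset (ℤ × ℤ)),
        (1 : ℝ) / (iset squareGrid C u).ncard := by
    rw [share, cnbr_eq, finsum_mem_coe_finset]
  have hfc : (1 : ℝ) / (iset squareGrid C c).ncard = 1 := by
    rw [hI, Set.ncard_singleton]; norm_num
  have hbound : ∀ u, squareGrid.Adj c u →
      (1 : ℝ) / (iset squareGrid C u).ncard ≤ 1 / 2 := by
    intro u hadj
    have h2 : (2 : ℝ) ≤ (iset squareGrid C u).ncard := by exact_mod_cast key u hadj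
    exact one_div_le_one_div_of_le (by norm_num) h2
  have hadj1 : squareGrid.Adj c (c + (1,0)) := by
    apply grid_adj; right; left; rw [Prod.ext_iff]; simp
  have hadj2 : squareGrid.Adj c (c - (1,0)) := by
    apply grid_adj; left; rw [Prod.ext_iff]; simp
  have hadj3 : squareGrid.Adj c (c + (0,1)) := by
    apply grid_adj; right; right; right; rw [Prod.ext_iff]; simp
  have hadj4 : squareGrid.Adj c (c - (0,1)) := by
    apply grid_adj; right; right; left; rw [Prod.ext_iff]; simp
  have h1 := hbound _ hadj1
  have h2 := hbound _ hadj2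
  have h3 := hbound _ hadj3
  have h4 := hbound _ hadj4
  have hm0 : c ∉ ({c+(1,0), c-(1,0), c+(0,1), c-(0,1)} : Finset (ℤ×ℤ)) := by
    simp [Prod.ext_iff]; omega
  have hm1 : c+(1,0) ∉ ({c-(1,0), c+(0,1), c-(0,1)} : Finset (ℤ×ℤ)) := by
    simp [Prod.ext_iff]; omega
  have hm2 : c-(1,0) ∉ ({c+(0,1), c-(0,1)} : Finset (ℤ×ℤ)) := by
    simp [Prod.ext_iff]
  have hm3 : c+(0,1) ∉ ({c-(0,1)} : Finset (ℤ×ℤ)) := by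
    simp [Prod.ext_iff]; omega
  rw [hsum, Finset.sum_insert hm0, Finset.sum_insert hm1, Finset.sum_insert hm2,
    Finset.sum_insert hm3, Finset.sum_singleton, hfc]
  linarith
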